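/- Every tree in which every internal vertex has degree exactly 3 and which has n ≥ 3 leaves contains an edge whose removal separates the leaves into two sets each of size at least n/3. -/

import Mathlib

open SimpleGraph

namespace TreeBalancedAux

variable {V : Type*} {G : SimpleGraph V}

/-- The side of the edge `uv` containing `v` (after deleting the edge). -/
def sideSet (G : SimpleGraph V) (u v : V) : Set V :=
  {w | (G.deleteEdges {s(u, v)}).Reachable v w}

lemma bridge (hT : G.IsTree) {u v : V} (h : G.Adj u v) :
    ¬ (G.deleteEdges {s(u, v)}).Reachable u v :=
  (isAcyclic_iff_forall_adj_isBridge.mp hT.IsAcyclic h)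

lemma mem_side_self (u v : V) : v ∈ sideSet G u v := Reachable.refl v

lemma side_not_both (hT : G.IsTree) {u v : V} (h : G.Adj u v) (w : V)
    (h1 : (G.deleteEdges {s(u, v)}).Reachable u w)
    (h2 : (G.deleteEdges {s(u, v)}).Reachable v w) : False :=
  bridge hT h (h1.trans h2.symm)

/-- a walk on the far side of a deleted bridge avoids the near endpoint, and hence can be
transferred to the graph with any other edge through `v` deleted instead. -/
lemma reach_transfer (hT : G.IsTree) {v c w : V} (hvc : G.Adj v c)
    (hR : (G.deleteEdges {s(v, c)}).Reachable c w) (e : Sym2 V)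
    (hve : v ∈ e) (hne : e ≠ s(v, c)) :
    (G.deleteEdges {e}).Reachable c w ∧ w ≠ v := by
  classical
  induction e using Sym2.ind with
  | _ x y =>
  obtain ⟨p0⟩ := hR
  obtain ⟨p, hp⟩ := p0.toPath
  have hvsupp : v ∉ p.support := by
    intro hv
    exact bridge hT hvc ((p.takeUntil v hv).reachable.symm)
  have hedge : ∀ e' ∈ p.edges, e' ∈ (G.deleteEdges {s(x, y)}).edgeSet := by
    intro e' he'
    have h1 : e' ∈ (G.deleteEdges {s(v, c)}).edgeSet := p.edges_subset_edgeSet he'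
    rw [edgeSet_deleteEdges] at h1 ⊢
    refine ⟨h1.1, ?_⟩
    simp only [Set.mem_singleton_iff]
    intro hxy
    subst hxy
    rcases Sym2.mem_iff.mp hve with h | h
    · exact hvsupp (h ▸ p.fst_mem_support_of_mem_edges he')
    · exact hvsupp (h ▸ p.snd_mem_support_of_mem_edges he')
  refine ⟨⟨p.transfer _ hedge⟩, fun hwv => hvsupp (hwv ▸ p.end_mem_support)⟩

lemma edge_ne {u v a : V} (huv : u ≠ v) (hau : a ≠ u) :
    (s(u, v) : Sym2 V) ≠ s(v, a) := by
  intro h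
  rw [Sym2.eq_iff] at h
  rcases h with ⟨h1, _⟩ | ⟨h1, _⟩
  · exact huv h1
  · exact hau h1.symm

lemma side_mono (hT : G.IsTree) {u v a : V} (huv : G.Adj u v) (hva : G.Adj v a)
    (hau : a ≠ u) : sideSet G v a ⊆ sideSet G u v := by
  intro w hw
  have hne : (s(u, v) : Sym2 V) ≠ s(v, a) := edge_ne huv.ne hau
  obtain ⟨hr, -⟩ := reach_transfer hT hva hw s(u, v) (by simp) hne
  have hadj : (G.deleteEdges {s(u, v)}).Adj v a := by
    rw [deleteEdges_adj]
    refine ⟨hva, ?_⟩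
    simp only [Set.mem_singleton_iff]
    exact fun hh => hne hh.symm
  exact hadj.reachable.trans hr

lemma side_disj (hT : G.IsTree) {v a b : V} (hva : G.Adj v a) (hvb : G.Adj v b)
    (hab : a ≠ b) {w : V}
    (h1 : w ∈ sideSet G v a) (h2 : w ∈ sideSet G v b) : False := by
  have hne : (s(v, a) : Sym2 V) ≠ s(v, b) := by
    intro h
    rw [Sym2.eq_iff] at h
    rcases h with ⟨_, h2⟩ | ⟨h1, _⟩
    · exact hab h2
    · exact hvb.ne h1
  obtain ⟨hr, -⟩ := reach_transfer hT hvb h2 s(v, a) (by simp) hne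
  have hadj : (G.deleteEdges {s(v, a)}).Adj v b := by
    rw [deleteEdges_adj]
    refine ⟨hvb, ?_⟩
    simp only [Set.mem_singleton_iff]
    exact fun hh => hne hh.symm
  exact side_not_both hT hva w (hadj.reachable.trans hr) h1

/-- cover lemma: every vertex is on one of the two sides of an edge. -/
lemma side_cover (hT : G.IsTree) {u v : V} (h : G.Adj u v) (w : V) :
    (G.deleteEdges {s(u, v)}).Reachable u w ∨ (G.deleteEdges {s(u, v)}).Reachable v w := by
  classical
  obtain ⟨p0⟩ := (hT.isConnected.preconnected v w)
  obtain ⟨p, hp⟩ := p0.toPath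
  cases p with
  | nil => exact Or.inr (Reachable.refl v)
  | cons h' q =>
    rename_i x
    rw [Walk.cons_isPath_iff] at hp
    by_cases hxu : x = u
    · subst hxu
      left
      refine ⟨q.toDeleteEdges _ ?_⟩
      intro e he
      simp only [Set.mem_singleton_iff]
      intro hevu
      subst hevu
      exact hp.2 (q.snd_mem_support_of_mem_edges he)
    · right
      refine ⟨Walk.toDeleteEdges _ (Walk.cons h' q) ?_⟩
      intro e he
      simp only [Set.mem_singleton_iff]
      intro hevu
      subst hevu
      rw [Walk.edges_cons, List.mem_cons] at he
      rcases he with he | he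
      · rw [Sym2.eq_iff] at he
        rcases he with ⟨h1, h2⟩ | ⟨h1, h2⟩
        · exact h.ne h1
        · exact hxu h1.symm
      · exact hp.2 (q.snd_mem_support_of_mem_edges he)

/-- splitting lemma at a degree-3 vertex. -/
lemma side_split [Fintype V] [DecidableEq V] [DecidableRel G.Adj]
    (hT : G.IsTree) {u v a b : V} (huv : G.Adj u v)
    (hNb : G.neighborFinset v = {u, a, b}) {w : V}
    (hw : w ∈ sideSet G u v) (hwv : w ≠ v) :
    w ∈ sideSet G v a ∨ w ∈ sideSet G v b := by
  obtain ⟨p0⟩ := hw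
  obtain ⟨p, hp⟩ := p0.toPath
  cases p with
  | nil => exact absurd rfl hwv.symm
  | cons h' q =>
    rename_i x
    rw [Walk.cons_isPath_iff] at hp
    have hadj : G.Adj v x := (deleteEdges_adj.mp h').1
    have hxu : x ≠ u := by
      intro hx
      subst hx
      exact (deleteEdges_adj.mp h').2 (by rw [Sym2.eq_swap]; simp)
    have hxmem : x ∈ ({u, a, b} : Finset V) := hNb ▸ (mem_neighborFinset G v x).mpr hadj
    simp only [Finset.mem_insert, Finset.mem_singleton] at hxmem
    have hreach : (G.deleteEdges {s(v, x)}).Reachable x w := by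
      refine ⟨Walk.transfer q _ ?_⟩
      intro e he
      have h1 : e ∈ (G.deleteEdges {s(u, v)}).edgeSet := q.edges_subset_edgeSet he
      rw [edgeSet_deleteEdges] at h1
      rw [edgeSet_deleteEdges]
      refine ⟨h1.1, ?_⟩
      simp only [Set.mem_singleton_iff]
      intro hevx
      subst hevx
      exact hp.2 (q.fst_mem_support_of_mem_edges he)
    rcases hxmem with hx | hx | hx
    · exact absurd hx hxu
    · subst hx; exact Or.inl hreach
    · subst hx; exact Or.inr hreach

lemma exists_leaf_in_side [Fintype V] [DecidableEq V] [DecidableRel G.Adj]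
    (hT : G.IsTree) (hdeg : ∀ v : V, 2 ≤ G.degree v → G.degree v = 3) :
    ∀ (k : ℕ) (u v : V), G.Adj u v → (sideSet G u v).ncard ≤ k →
      ∃ w, G.degree w = 1 ∧ w ∈ sideSet G u v := by
  intro k
  induction k with
  | zero =>
    intro u v huv hk
    exfalso
    have : 0 < (sideSet G u v).ncard :=
      (Set.ncard_pos (Set.toFinite _)).mpr ⟨v, mem_side_self u v⟩
    omega
  | succ k ih =>
    intro u v huv hk
    by_cases hv : G.degree v = 1
    · exact ⟨v, hv, mem_side_self u v⟩
    · have hd1 : 0 < G.degree v :=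
        (G.degree_pos_iff_exists_adj v).mpr ⟨u, huv.symm⟩
      have hd3 : G.degree v = 3 := hdeg v (by omega)
      have hucard : ((G.neighborFinset v).erase u).Nonempty := by
        have hu : u ∈ G.neighborFinset v := (mem_neighborFinset G v u).mpr huv.symm
        have : ((G.neighborFinset v).erase u).card = 2 := by
          rw [Finset.card_erase_of_mem hu]
          rw [← G.card_neighborFinset_eq_degree] at hd3
          omega
        exact Finset.card_pos.mp (by omega)
      obtain ⟨a, ha⟩ := hucard
      have hau : a ≠ u := (Finset.mem_erase.mp ha).1
      have hva : G.Adj v a := (mem_neighborFinset G v a).mp (Finset.mem_erase.mp ha).2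
      have hsub : sideSet G v a ⊆ sideSet G u v := side_mono hT huv hva hau
      have hvnot : v ∉ sideSet G v a := fun hmem => bridge hT hva hmem.symm
      have hss : sideSet G v a ⊂ sideSet G u v :=
        ⟨hsub, fun hsup => hvnot (hsup (mem_side_self u v))⟩
      have hlt : (sideSet G v a).ncard < (sideSet G u v).ncard :=
        Set.ncard_lt_ncard hss (Set.toFinite _)
      obtain ⟨w, hw1, hw2⟩ := ih v a hva (by omega)
      exact ⟨w, hw1, hsub hw2⟩

lemma side_of_leaf [Fintype V] [DecidableEq V] [DecidableRel G.Adj]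
    {x y : V} (hxy : G.Adj x y) (hy : G.degree y = 1) :
    sideSet G x y ⊆ {y} := by
  intro w hw
  obtain ⟨p⟩ := hw
  cases p with
  | nil => rfl
  | cons h' q =>
    rename_i z
    exfalso
    have hadj : G.Adj y z := (deleteEdges_adj.mp h').1
    have hNb : G.neighborFinset y = {x} := by
      apply Finset.eq_singleton_iff_unique_mem.mpr
      refine ⟨(mem_neighborFinset G y x).mpr hxy.symm, ?_⟩
      intro c hc
      by_contra hcx
      have : 2 ≤ (G.neighborFinset y).card := by
        have : ({c, x} : Finset V) ⊆ G.neighborFinset y := by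
          intro d hd
          simp only [Finset.mem_insert, Finset.mem_singleton] at hd
          rcases hd with h | h
          · exact h.symm ▸ hc
          · exact h.symm ▸ (mem_neighborFinset G y x).mpr hxy.symm
        calc 2 = ({c, x} : Finset V).card := by rw [Finset.card_insert_of_notMem (by simpa using hcx), Finset.card_singleton]
        _ ≤ _ := Finset.card_le_card this
      rw [G.card_neighborFinset_eq_degree, hy] at this
      omega
    have hz : z = x := by
      have := (mem_neighborFinset G y z).mpr hadj
      rw [hNb, Finset.mem_singleton] at this
      exact this
    subst hz
    apply (deleteEdges_adj.mp h').2
    simp only [Set.mem_singleton_iff]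
    exact Sym2.eq_swap

lemma neighbors_of_deg3 [Fintype V] [DecidableEq V] [DecidableRel G.Adj]
    {u v : V} (huv : G.Adj u v) (hd3 : G.degree v = 3) :
    ∃ a b : V, G.Adj v a ∧ G.Adj v b ∧ a ≠ u ∧ b ≠ u ∧ a ≠ b ∧
      G.neighborFinset v = {u, a, b} := by
  have hu : u ∈ G.neighborFinset v := (mem_neighborFinset G v u).mpr huv.symm
  have hcard : (G.neighborFinset v).card = 3 := by
    rw [G.card_neighborFinset_eq_degree]; exact hd3
  have herase : ((G.neighborFinset v).erase u).card = 2 := by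
    rw [Finset.card_erase_of_mem hu, hcard]
  obtain ⟨a, ha, b, hb, hab⟩ := Finset.one_lt_card.mp (by omega : 1 < ((G.neighborFinset v).erase u).card)
  have hau : a ≠ u := (Finset.mem_erase.mp ha).1
  have hbu : b ≠ u := (Finset.mem_erase.mp hb).1
  have hva : G.Adj v a := (mem_neighborFinset G v a).mp (Finset.mem_erase.mp ha).2
  have hvb : G.Adj v b := (mem_neighborFinset G v b).mp (Finset.mem_erase.mp hb).2
  refine ⟨a, b, hva, hvb, hau, hbu, hab, ?_⟩
  have hsub : ({u, a, b} : Finset V) ⊆ G.neighborFinset v := by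
    intro d hd
    simp only [Finset.mem_insert, Finset.mem_singleton] at hd
    rcases hd with rfl | rfl | rfl
    · exact hu
    · exact (Finset.mem_erase.mp ha).2
    · exact (Finset.mem_erase.mp hb).2
  have hc3 : ({u, a, b} : Finset V).card = 3 := by
    rw [Finset.card_insert_of_notMem (by simp [hau.symm, hbu.symm] : u ∉ ({a, b} : Finset V)),
      Finset.card_insert_of_notMem (by simpa using hab), Finset.card_singleton]
  exact (Finset.eq_of_subset_of_card_le hsub (by omega)).symm

lemma side_sum [Fintype V] [DecidableEq V] [DecidableRel G.Adj]
    (hT : G.IsTree) {x y : V} (hxy : G.Adj x y) :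
    ({w | G.degree w = 1} ∩ sideSet G x y).ncard
      + ({w | G.degree w = 1} ∩ sideSet G y x).ncard
      = {w : V | G.degree w = 1}.ncard := by
  have hyx : (s(y, x) : Sym2 V) = s(x, y) := Sym2.eq_swap
  have hdisj : Disjoint ({w | G.degree w = 1} ∩ sideSet G x y)
      ({w | G.degree w = 1} ∩ sideSet G y x) := by
    rw [Set.disjoint_left]
    rintro w ⟨-, h1⟩ ⟨-, h2⟩
    have h2' : (G.deleteEdges {s(x, y)}).Reachable x w := by
      have h2'' : (G.deleteEdges {s(y, x)}).Reachable x w := h2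
      rwa [hyx] at h2''
    exact side_not_both hT hxy w h2' h1
  rw [← Set.ncard_union_eq hdisj (Set.toFinite _) (Set.toFinite _),
    ← Set.inter_union_distrib_left]
  have huniv : sideSet G x y ∪ sideSet G y x = Set.univ := by
    ext w
    simp only [Set.mem_union, Set.mem_univ, iff_true]
    rcases side_cover hT hxy w with h | h
    · right
      show (G.deleteEdges {s(y, x)}).Reachable x w
      rwa [hyx]
    · left; exact h
  rw [huniv, Set.inter_univ]

end TreeBalancedAux

/-- Every finite tree whose internal vertices all have degree exactly 3 and which has
`n ≥ 3` leaves contains an edge whose removal separates the leaves into two sets each of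
size at least `n/3`. -/
theorem tree_balanced_edge_deg3 {V : Type*} [Fintype V] [DecidableEq V]
    (G : SimpleGraph V) [DecidableRel G.Adj] (hT : G.IsTree)
    (hdeg : ∀ v : V, 2 ≤ G.degree v → G.degree v = 3)
    (n : ℕ) (hn : n = {v : V | G.degree v = 1}.ncard) (hn3 : 3 ≤ n) :
    ∃ u v : V, G.Adj u v ∧
      (n : ℝ) / 3 ≤
        ({w : V | G.degree w = 1 ∧ (G.deleteEdges {s(u, v)}).Reachable u w}.ncard : ℝ) ∧
      (n : ℝ) / 3 ≤
        ({w : V | G.degree w = 1 ∧ (G.deleteEdges {s(u, v)}).Reachable v w}.ncard : ℝ) := by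
  classical
  open TreeBalancedAux in
  let f : V → V → ℕ := fun a b => ({w | G.degree w = 1} ∩ sideSet G a b).ncard
  have hLpos : 0 < {v : V | G.degree v = 1}.ncard := by omega
  obtain ⟨x0, hx0⟩ := (Set.ncard_pos (Set.toFinite _)).mp hLpos
  have hx0' : G.degree x0 = 1 := hx0
  obtain ⟨y0, hy0⟩ := (G.degree_pos_iff_exists_adj x0).mp (by omega)
  have hsum : ∀ a b : V, G.Adj a b → f a b + f b a = n := by
    intro a b hab
    rw [hn]
    exact side_sum hT hab
  have hex : ∃ m : ℕ, ∃ a b : V, G.Adj a b ∧ max (f a b) (f b a) = m :=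
    ⟨_, x0, y0, hy0, rfl⟩
  obtain ⟨u, v, huv, hMuv⟩ := Nat.find_spec hex
  have hmin : ∀ a b : V, G.Adj a b → max (f u v) (f v u) ≤ max (f a b) (f b a) := by
    intro a b hab
    rw [hMuv]
    exact Nat.find_min' hex ⟨a, b, hab, rfl⟩
  have step : ∀ x y : V, G.Adj x y →
      (∀ a b : V, G.Adj a b → max (f x y) (f y x) ≤ max (f a b) (f b a)) →
      n ≤ 3 * f y x := by
    intro x y hxy hminxy
    by_contra hsmall
    rw [not_le] at hsmall
    have hsxy := hsum x y hxy
    have h2n : 2 * n < 3 * f x y := by omega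
    have hy1 : G.degree y ≠ 1 := by
      intro h1
      have hsub : sideSet G x y ⊆ {y} := side_of_leaf hxy h1
      have hle1 : f x y ≤ 1 := by
        calc f x y ≤ (sideSet G x y).ncard :=
              Set.ncard_le_ncard Set.inter_subset_right (Set.toFinite _)
          _ ≤ ({y} : Set V).ncard := Set.ncard_le_ncard hsub (Set.toFinite _)
          _ = 1 := Set.ncard_singleton y
      omega
    have hdy : G.degree y = 3 := by
      refine hdeg y ?_
      have : 0 < G.degree y := (G.degree_pos_iff_exists_adj y).mpr ⟨x, hxy.symm⟩
      omega
    obtain ⟨a, b, hya, hyb, hax, hbx, hab, hNb⟩ := neighbors_of_deg3 hxy hdy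
    have inner : ∀ a b : V, G.Adj y a → G.Adj y b → a ≠ x → b ≠ x → a ≠ b →
        G.neighborFinset y = {x, a, b} → f y b ≤ f y a → False := by
      intro a b hya hyb hax hbx hab hNb hba
      have hdecomp : ({w | G.degree w = 1} ∩ sideSet G x y)
          = ({w | G.degree w = 1} ∩ sideSet G y a)
            ∪ ({w | G.degree w = 1} ∩ sideSet G y b) := by
        ext w
        simp only [Set.mem_inter_iff, Set.mem_union, Set.mem_setOf_eq]
        constructor
        · rintro ⟨hwL, hws⟩
          have hwy : w ≠ y := by
            intro h
            rw [h] at hwL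
            omega
          rcases side_split hT hxy hNb hws hwy with h | h
          · exact Or.inl ⟨hwL, h⟩
          · exact Or.inr ⟨hwL, h⟩
        · rintro (⟨hwL, hws⟩ | ⟨hwL, hws⟩)
          · exact ⟨hwL, side_mono hT hxy hya hax hws⟩
          · exact ⟨hwL, side_mono hT hxy hyb hbx hws⟩
      have hdisj2 : Disjoint ({w | G.degree w = 1} ∩ sideSet G y a)
          ({w | G.degree w = 1} ∩ sideSet G y b) := by
        rw [Set.disjoint_left]
        rintro w ⟨-, h1⟩ ⟨-, h2⟩
        exact side_disj hT hya hyb hab h1 h2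
      have hfd : f x y = f y a + f y b := by
        show ({w | G.degree w = 1} ∩ sideSet G x y).ncard = _
        rw [hdecomp, Set.ncard_union_eq hdisj2 (Set.toFinite _) (Set.toFinite _)]
      obtain ⟨w0, hw0L, hw0s⟩ :=
        exists_leaf_in_side hT hdeg ((sideSet G y b).ncard) y b hyb le_rfl
      have hfb1 : 1 ≤ f y b :=
        (Set.ncard_pos (Set.toFinite _)).mpr ⟨w0, ⟨hw0L, hw0s⟩⟩
      have hsya := hsum y a hya
      have h1 : f y a < f x y := by omega
      have h2 : f a y < f x y := by omega
      have hlt : max (f y a) (f a y) < max (f x y) (f y x) :=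
        lt_of_lt_of_le (max_lt h1 h2) (le_max_left _ _)
      exact absurd (hminxy y a hya) (not_le.mpr hlt)
    rcases le_total (f y b) (f y a) with hba | hba
    · exact inner a b hya hyb hax hbx hab hNb hba
    · refine inner b a hyb hya hbx hax hab.symm ?_ hba
      rw [hNb]
      ext z
      simp only [Finset.mem_insert, Finset.mem_singleton]
      tauto
  have hstep1 := step u v huv hmin
  have hstep2 := step v u huv.symm (by
    intro a b hab
    rw [max_comm]
    exact hmin a b hab)
  refine ⟨u, v, huv, ?_, ?_⟩
  · have hrw : sideSet G v u = {w | (G.deleteEdges {s(u, v)}).Reachable u w} := by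
      unfold TreeBalancedAux.sideSet
      rw [show (s(v, u) : Sym2 V) = s(u, v) from Sym2.eq_swap]
    have hset : {w : V | G.degree w = 1 ∧ (G.deleteEdges {s(u, v)}).Reachable u w}
        = {w | G.degree w = 1} ∩ sideSet G v u := by
      rw [hrw]
      ext w
      simp only [Set.mem_inter_iff, Set.mem_setOf_eq]
    rw [hset, div_le_iff₀ (by norm_num : (0 : ℝ) < 3)]
    have : (n : ℕ) ≤ f v u * 3 := by omega
    exact_mod_cast this
  · have hset : {w : V | G.degree w = 1 ∧ (G.deleteEdges {s(u, v)}).Reachable v w}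
        = {w | G.degree w = 1} ∩ sideSet G u v := by
      ext w
      simp only [Set.mem_inter_iff, Set.mem_setOf_eq]
      exact Iff.rfl
    rw [hset, div_le_iff₀ (by norm_num : (0 : ℝ) < 3)]
    have : (n : ℕ) ≤ f u v * 3 := by omega
    exact_mod_cast this
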